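/- arXiv:2510.25350 — 6 statements merged into one kernel-verified Lean document; each statement's English description precedes it below -/
import Mathlib

section
/- Let q ∈ K be invertible and not a root of unity. Let A be the unital K-algebra generated by X, Y, Z with relations XZ = q^2 ZX, ZY = q^2 YZ, XY + q^2 Z^2 = 1, YX + q^{-2} Z^2 = 1. Define b_{n,m} = Y^n Z^m for n ≥ 0 and b_{n,m} = X^{-n} Z^m for n < 0 (m ≥ 0). Then the family (b_{n,m}) indexed by n ∈ ℤ, m ∈ ℤ_{≥0} is a K-basis of A. -/
open FreeAlgebra in
/-- Relations: with `X = ι 0`, `Y = ι 1`, `Z = ι 2`,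
`XZ = q²ZX`, `ZY = q²YZ`, `XY + q²Z² = 1`, `YX + q⁻²Z² = 1`. -/
inductive QRel (K : Type) [Field K] (q : K) :
    FreeAlgebra K (Fin 3) → FreeAlgebra K (Fin 3) → Prop
  | xz : QRel K q (ι K 0 * ι K 2) (q ^ 2 • (ι K 2 * ι K 0))
  | zy : QRel K q (ι K 2 * ι K 1) (q ^ 2 • (ι K 1 * ι K 2))
  | unit1 : QRel K q (ι K 0 * ι K 1 + q ^ 2 • (ι K 2 * ι K 2)) 1
  | unit2 : QRel K q (ι K 1 * ι K 0 + (q ^ 2)⁻¹ • (ι K 2 * ι K 2)) 1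

namespace QProof

abbrev V (K : Type) [Field K] : Type := (ℤ × ℕ) →₀ K

noncomputable def e {K : Type} [Field K] (p : ℤ × ℕ) : V K := Finsupp.single p 1

variable {K : Type} [Field K] (q : K)

noncomputable def Zop : V K →ₗ[K] V K :=
  Finsupp.lift _ K _ fun p => q ^ (2 * p.1) • e (p.1, p.2 + 1)

noncomputable def Yop : V K →ₗ[K] V K :=
  Finsupp.lift _ K _ fun p =>
    if 0 ≤ p.1 then e (p.1 + 1, p.2)
    else e (p.1 + 1, p.2) - q ^ (4 * p.1 + 2) • e (p.1 + 1, p.2 + 2)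

noncomputable def Xop : V K →ₗ[K] V K :=
  Finsupp.lift _ K _ fun p =>
    if p.1 ≤ 0 then e (p.1 - 1, p.2)
    else e (p.1 - 1, p.2) - q ^ (4 * p.1 - 2) • e (p.1 - 1, p.2 + 2)

@[simp] lemma Zop_e (n : ℤ) (m : ℕ) :
    Zop q (e (n, m)) = q ^ (2 * n) • e (n, m + 1) := by
  rw [Zop, Finsupp.lift_apply, e, Finsupp.sum_single_index (by simp)]
  rw [one_smul]

@[simp] lemma Yop_e (n : ℤ) (m : ℕ) :
    Yop q (e (n, m)) =
      if 0 ≤ n then e (n + 1, m)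
      else e (n + 1, m) - q ^ (4 * n + 2) • e (n + 1, m + 2) := by
  rw [Yop, Finsupp.lift_apply, e, Finsupp.sum_single_index (by simp)]
  rw [one_smul]

@[simp] lemma Xop_e (n : ℤ) (m : ℕ) :
    Xop q (e (n, m)) =
      if n ≤ 0 then e (n - 1, m)
      else e (n - 1, m) - q ^ (4 * n - 2) • e (n - 1, m + 2) := by
  rw [Xop, Finsupp.lift_apply, e, Finsupp.sum_single_index (by simp)]
  rw [one_smul]

end QProof

namespace QProof
variable {K : Type} [Field K] (q : K)

lemma lhom_ext_e {f g : V K →ₗ[K] V K} (h : ∀ p, f (e p) = g (e p)) : f = g :=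
  Finsupp.lhom_ext fun a b => by
    rw [← mul_one b, ← smul_eq_mul, ← Finsupp.smul_single, ← e, map_smul, map_smul, h]

lemma rel_xz (hq0 : q ≠ 0) : Xop q * Zop q = (q ^ 2 : K) • (Zop q * Xop q) := by
  apply lhom_ext_e; rintro ⟨n, m⟩
  simp only [Module.End.mul_apply, LinearMap.smul_apply, Zop_e, Xop_e, map_smul, map_sub,
    smul_sub, smul_smul]
  split_ifs with h <;>
  · simp only [Module.End.mul_apply, LinearMap.smul_apply, Zop_e, Xop_e, map_smul, map_sub,
      smul_sub, smul_smul]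
    match_scalars <;>
    · simp [← zpow_natCast q, ← zpow_add₀ hq0, -zpow_ofNat]
      ring_nf


lemma rel_zy (hq0 : q ≠ 0) : Zop q * Yop q = (q ^ 2 : K) • (Yop q * Zop q) := by
  apply lhom_ext_e; rintro ⟨n, m⟩
  simp only [Module.End.mul_apply, LinearMap.smul_apply, LinearMap.add_apply, Module.End.one_apply,
    Zop_e, Xop_e, Yop_e, map_smul, map_sub, map_add, smul_sub, smul_add, smul_smul]
  split_ifs with h <;>
  · try simp only [Module.End.mul_apply, LinearMap.smul_apply, LinearMap.add_apply,
      Module.End.one_apply,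
      Zop_e, Xop_e, Yop_e, map_smul, map_sub, map_add, smul_sub, smul_add, smul_smul]
    (try split_ifs with h2) <;>
    first
    | (exfalso; omega)
    | · try simp only [add_sub_cancel_right, sub_add_cancel,
          show ∀ k : ℕ, k + 1 + 1 = k + 2 from fun _ => rfl]
        match_scalars <;>
        · simp [← zpow_natCast q, ← zpow_neg, ← zpow_add₀ hq0, -zpow_ofNat]
          try ring_nf

lemma rel_unit1 (hq0 : q ≠ 0) :
    Xop q * Yop q + (q ^ 2 : K) • (Zop q * Zop q) = 1 := by
  apply lhom_ext_e; rintro ⟨n, m⟩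
  simp only [Module.End.mul_apply, LinearMap.smul_apply, LinearMap.add_apply, Module.End.one_apply,
    Zop_e, Xop_e, Yop_e, map_smul, map_sub, map_add, smul_sub, smul_add, smul_smul]
  split_ifs with h <;>
  · try simp only [Module.End.mul_apply, LinearMap.smul_apply, LinearMap.add_apply,
      Module.End.one_apply,
      Zop_e, Xop_e, Yop_e, map_smul, map_sub, map_add, smul_sub, smul_add, smul_smul]
    (try split_ifs with h2) <;>
    first
    | (exfalso; omega)
    | · try simp only [add_sub_cancel_right, sub_add_cancel,
          show ∀ k : ℕ, k + 1 + 1 = k + 2 from fun _ => rfl]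
        match_scalars <;>
        · simp [← zpow_natCast q, ← zpow_neg, ← zpow_add₀ hq0, -zpow_ofNat]
          try ring_nf

lemma rel_unit2 (hq0 : q ≠ 0) :
    Yop q * Xop q + ((q ^ 2 : K)⁻¹) • (Zop q * Zop q) = 1 := by
  apply lhom_ext_e; rintro ⟨n, m⟩
  simp only [Module.End.mul_apply, LinearMap.smul_apply, LinearMap.add_apply, Module.End.one_apply,
    Zop_e, Xop_e, Yop_e, map_smul, map_sub, map_add, smul_sub, smul_add, smul_smul]
  split_ifs with h <;>
  · try simp only [Module.End.mul_apply, LinearMap.smul_apply, LinearMap.add_apply,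
      Module.End.one_apply,
      Zop_e, Xop_e, Yop_e, map_smul, map_sub, map_add, smul_sub, smul_add, smul_smul]
    (try split_ifs with h2) <;>
    first
    | (exfalso; omega)
    | · try simp only [add_sub_cancel_right, sub_add_cancel,
          show ∀ k : ℕ, k + 1 + 1 = k + 2 from fun _ => rfl]
        match_scalars <;>
        · simp [← zpow_natCast q, ← zpow_neg, ← zpow_add₀ hq0, -zpow_ofNat]
          try ring_nf

end QProof

namespace QProof
variable {K : Type} [Field K] (q : K)

noncomputable def rho0 : FreeAlgebra K (Fin 3) →ₐ[K] Module.End K (V K) :=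
  FreeAlgebra.lift K ![Xop q, Yop q, Zop q]

lemma rho0_rel (hq0 : q ≠ 0) : ∀ ⦃a b : FreeAlgebra K (Fin 3)⦄,
    QRel K q a b → rho0 q a = rho0 q b := by
  intro a b r
  cases r <;>
    simp only [rho0, map_mul, map_add, map_smul, map_one, FreeAlgebra.lift_ι_apply,
      Matrix.cons_val_zero, Matrix.cons_val_one, Matrix.head_cons, Matrix.cons_val_two,
      Matrix.tail_cons]
  · exact rel_xz q hq0
  · exact rel_zy q hq0
  · exact rel_unit1 q hq0
  · exact rel_unit2 q hq0

noncomputable def rho (hq0 : q ≠ 0) : RingQuot (QRel K q) →ₐ[K] Module.End K (V K) :=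
  RingQuot.liftAlgHom K ⟨rho0 q, rho0_rel q hq0⟩

variable (hq0 : q ≠ 0)

lemma rho_X : rho q hq0 (RingQuot.mkAlgHom K _ (FreeAlgebra.ι K 0)) = Xop q := by
  rw [rho, RingQuot.liftAlgHom_mkAlgHom_apply]; simp [rho0]

lemma rho_Y : rho q hq0 (RingQuot.mkAlgHom K _ (FreeAlgebra.ι K 1)) = Yop q := by
  rw [rho, RingQuot.liftAlgHom_mkAlgHom_apply]; simp [rho0]

lemma rho_Z : rho q hq0 (RingQuot.mkAlgHom K _ (FreeAlgebra.ι K 2)) = Zop q := by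
  rw [rho, RingQuot.liftAlgHom_mkAlgHom_apply]; simp [rho0]

end QProof

namespace QProof
variable {K : Type} [Field K] (q : K)

noncomputable def XA : RingQuot (QRel K q) := RingQuot.mkAlgHom K _ (FreeAlgebra.ι K 0)
noncomputable def YA : RingQuot (QRel K q) := RingQuot.mkAlgHom K _ (FreeAlgebra.ι K 1)
noncomputable def ZA : RingQuot (QRel K q) := RingQuot.mkAlgHom K _ (FreeAlgebra.ι K 2)

lemma aXZ : XA q * ZA q = q ^ 2 • (ZA q * XA q) := by
  have := RingQuot.mkAlgHom_rel K (QRel.xz (K := K) (q := q))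
  simpa [XA, ZA, map_mul, map_smul] using this

lemma aZY : ZA q * YA q = q ^ 2 • (YA q * ZA q) := by
  have := RingQuot.mkAlgHom_rel K (QRel.zy (K := K) (q := q))
  simpa [YA, ZA, map_mul, map_smul] using this

lemma aXY : XA q * YA q = 1 - q ^ 2 • (ZA q * ZA q) := by
  have := RingQuot.mkAlgHom_rel K (QRel.unit1 (K := K) (q := q))
  simp only [map_add, map_mul, map_smul, map_one] at this
  rw [eq_sub_iff_add_eq]
  simpa [XA, YA, ZA] using this

lemma aYX : YA q * XA q = 1 - (q ^ 2)⁻¹ • (ZA q * ZA q) := by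
  have := RingQuot.mkAlgHom_rel K (QRel.unit2 (K := K) (q := q))
  simp only [map_add, map_mul, map_smul, map_one] at this
  rw [eq_sub_iff_add_eq]
  simpa [XA, YA, ZA] using this

lemma aZX (hq0 : q ≠ 0) : ZA q * XA q = (q ^ 2)⁻¹ • (XA q * ZA q) := by
  rw [aXZ, inv_smul_smul₀ (pow_ne_zero 2 hq0)]

lemma aZYn (a : ℕ) : ZA q * YA q ^ a = (q ^ 2) ^ a • (YA q ^ a * ZA q) := by
  induction a with
  | zero => simp
  | succ a ih =>
    calc ZA q * YA q ^ (a + 1) = (ZA q * YA q ^ a) * YA q := by rw [pow_succ, mul_assoc]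
    _ = (q ^ 2) ^ a • (YA q ^ a * (ZA q * YA q)) := by rw [ih, smul_mul_assoc, mul_assoc]
    _ = (q ^ 2) ^ a • (YA q ^ a * (q ^ 2 • (YA q * ZA q))) := by rw [aZY]
    _ = (q ^ 2) ^ (a + 1) • (YA q ^ (a + 1) * ZA q) := by
        rw [mul_smul_comm, smul_smul, ← pow_succ, ← mul_assoc, ← pow_succ]

lemma aZXn (hq0 : q ≠ 0) (a : ℕ) :
    ZA q * XA q ^ a = ((q ^ 2)⁻¹) ^ a • (XA q ^ a * ZA q) := by
  induction a with
  | zero => simp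
  | succ a ih =>
    calc ZA q * XA q ^ (a + 1) = (ZA q * XA q ^ a) * XA q := by rw [pow_succ, mul_assoc]
    _ = ((q ^ 2)⁻¹) ^ a • (XA q ^ a * (ZA q * XA q)) := by rw [ih, smul_mul_assoc, mul_assoc]
    _ = ((q ^ 2)⁻¹) ^ a • (XA q ^ a * ((q ^ 2)⁻¹ • (XA q * ZA q))) := by rw [aZX q hq0]
    _ = ((q ^ 2)⁻¹) ^ (a + 1) • (XA q ^ (a + 1) * ZA q) := by
        rw [mul_smul_comm, smul_smul, ← pow_succ, ← mul_assoc, ← pow_succ]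

lemma aZYnm (a m : ℕ) :
    ZA q * (YA q ^ a * ZA q ^ m) = (q ^ 2) ^ a • (YA q ^ a * ZA q ^ (m + 1)) := by
  rw [← mul_assoc, aZYn, smul_mul_assoc, mul_assoc, ← pow_succ']

lemma aZXnm (hq0 : q ≠ 0) (a m : ℕ) :
    ZA q * (XA q ^ a * ZA q ^ m) = ((q ^ 2)⁻¹) ^ a • (XA q ^ a * ZA q ^ (m + 1)) := by
  rw [← mul_assoc, aZXn q hq0, smul_mul_assoc, mul_assoc, ← pow_succ']

noncomputable def bfun (p : ℤ × ℕ) : RingQuot (QRel K q) :=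
  (if 0 ≤ p.1 then YA q ^ p.1.toNat else XA q ^ (-p.1).toNat) * ZA q ^ p.2

noncomputable def S : Submodule K (RingQuot (QRel K q)) :=
  Submodule.span K (Set.range (bfun q))

lemma bY (j m : ℕ) : YA q ^ j * ZA q ^ m = bfun q ((j : ℤ), m) := by
  simp [bfun]

lemma bX (j m : ℕ) : XA q ^ j * ZA q ^ m = bfun q (-(j : ℤ), m) := by
  rcases Nat.eq_zero_or_pos j with h | h
  · subst h; simp [bfun]
  · have h1 : ¬ (0 ≤ -(j : ℤ)) := by omega
    have h2 : (-(-(j : ℤ))).toNat = j := by omega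
    simp [bfun, h1, h2, h.ne']

lemma bY_mem (j m : ℕ) : YA q ^ j * ZA q ^ m ∈ S q := by
  rw [bY]; exact Submodule.subset_span ⟨_, rfl⟩

lemma bX_mem (j m : ℕ) : XA q ^ j * ZA q ^ m ∈ S q := by
  rw [bX]; exact Submodule.subset_span ⟨_, rfl⟩

lemma Z_mul_bY (a m : ℕ) : ZA q * (YA q ^ a * ZA q ^ m) ∈ S q := by
  rw [aZYnm]; exact Submodule.smul_mem _ _ (bY_mem q a (m + 1))

lemma Z_mul_bX (hq0 : q ≠ 0) (a m : ℕ) : ZA q * (XA q ^ a * ZA q ^ m) ∈ S q := by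
  rw [aZXnm q hq0]; exact Submodule.smul_mem _ _ (bX_mem q a (m + 1))

lemma Y_mul_bY (a m : ℕ) : YA q * (YA q ^ a * ZA q ^ m) ∈ S q := by
  rw [← mul_assoc, ← pow_succ']; exact bY_mem q (a + 1) m

lemma X_mul_bX (a m : ℕ) : XA q * (XA q ^ a * ZA q ^ m) ∈ S q := by
  rw [← mul_assoc, ← pow_succ']; exact bX_mem q (a + 1) m

lemma Y_mul_bX (hq0 : q ≠ 0) (a m : ℕ) : YA q * (XA q ^ a * ZA q ^ m) ∈ S q := by
  rcases a with _ | a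
  · simpa using Y_mul_bY q 0 m
  · have : YA q * (XA q ^ (a + 1) * ZA q ^ m)
        = (XA q ^ a * ZA q ^ m)
          - (q ^ 2)⁻¹ • (ZA q * (ZA q * (XA q ^ a * ZA q ^ m))) := by
      rw [pow_succ', mul_assoc, ← mul_assoc (YA q), aYX, sub_mul, one_mul, smul_mul_assoc,
        mul_assoc]
    rw [this]
    refine sub_mem (bX_mem q a m) (Submodule.smul_mem _ _ ?_)
    rw [aZXnm q hq0, mul_smul_comm]
    exact Submodule.smul_mem _ _ (Z_mul_bX q hq0 a (m + 1))

lemma X_mul_bY (a m : ℕ) : XA q * (YA q ^ a * ZA q ^ m) ∈ S q := by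
  rcases a with _ | a
  · simpa using X_mul_bX q 0 m
  · have : XA q * (YA q ^ (a + 1) * ZA q ^ m)
        = (YA q ^ a * ZA q ^ m)
          - q ^ 2 • (ZA q * (ZA q * (YA q ^ a * ZA q ^ m))) := by
      rw [pow_succ', mul_assoc, ← mul_assoc (XA q), aXY, sub_mul, one_mul, smul_mul_assoc,
        mul_assoc]
    rw [this]
    refine sub_mem (bY_mem q a m) (Submodule.smul_mem _ _ ?_)
    rw [aZYnm, mul_smul_comm]
    exact Submodule.smul_mem _ _ (Z_mul_bY q a (m + 1))

lemma mul_S_closed (a : RingQuot (QRel K q)) (h : ∀ p, a * bfun q p ∈ S q) :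
    ∀ s ∈ S q, a * s ∈ S q := by
  intro s hs
  have hle : S q ≤ (S q).comap (LinearMap.mulLeft K a) := by
    rw [S, Submodule.span_le]
    rintro _ ⟨p, rfl⟩
    exact h p
  exact hle hs

lemma gen_mul_S (hq0 : q ≠ 0) (i : Fin 3) :
    ∀ s ∈ S q, RingQuot.mkAlgHom K (QRel K q) (FreeAlgebra.ι K i) * s ∈ S q := by
  fin_cases i
  · refine mul_S_closed q _ fun p => ?_
    rcases p with ⟨n, m⟩
    by_cases h : 0 ≤ n <;> simp only [bfun, h, if_true, if_false]
    · exact X_mul_bY q _ _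
    · exact X_mul_bX q _ _
  · refine mul_S_closed q _ fun p => ?_
    rcases p with ⟨n, m⟩
    by_cases h : 0 ≤ n <;> simp only [bfun, h, if_true, if_false]
    · exact Y_mul_bY q _ _
    · exact Y_mul_bX q hq0 _ _
  · refine mul_S_closed q _ fun p => ?_
    rcases p with ⟨n, m⟩
    by_cases h : 0 ≤ n <;> simp only [bfun, h, if_true, if_false]
    · exact Z_mul_bY q _ _
    · exact Z_mul_bX q hq0 _ _

lemma one_mem_S : (1 : RingQuot (QRel K q)) ∈ S q := by
  have : bfun q (0, 0) = 1 := by simp [bfun]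
  rw [← this]; exact Submodule.subset_span ⟨_, rfl⟩

lemma S_eq_top (hq0 : q ≠ 0) : S q = ⊤ := by
  rw [eq_top_iff]
  intro a _
  obtain ⟨x, rfl⟩ := RingQuot.mkAlgHom_surjective K (QRel K q) a
  have key : ∀ x : FreeAlgebra K (Fin 3), ∀ s ∈ S q,
      RingQuot.mkAlgHom K (QRel K q) x * s ∈ S q := by
    intro x
    induction x using FreeAlgebra.induction with
    | grade0 r =>
      intro s hs
      rw [AlgHom.commutes, Algebra.algebraMap_eq_smul_one, smul_mul_assoc, one_mul]
      exact Submodule.smul_mem _ _ hs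
    | grade1 i => exact gen_mul_S q hq0 i
    | mul a b ha hb =>
      intro s hs
      rw [map_mul, mul_assoc]
      exact ha _ (hb _ hs)
    | add a b ha hb =>
      intro s hs
      rw [map_add, add_mul]
      exact add_mem (ha s hs) (hb s hs)
  simpa using key x 1 (one_mem_S q)

end QProof

namespace QProof
variable {K : Type} [Field K] (q : K)

lemma Zop_pow (m : ℕ) : (Zop q ^ m) (e ((0 : ℤ), 0)) = e (0, m) := by
  induction m with
  | zero => simp
  | succ m ih =>
    rw [pow_succ', Module.End.mul_apply, ih, Zop_e]
    norm_num

lemma Yop_pow (n : ℤ) (hn : 0 ≤ n) (m : ℕ) (t : ℕ) :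
    (Yop q ^ t) (e (n, m)) = e (n + t, m) := by
  induction t with
  | zero => simp
  | succ t ih =>
    have h : (0 : ℤ) ≤ n + t := by omega
    rw [pow_succ', Module.End.mul_apply, ih, Yop_e, if_pos h]
    congr 2
    push_cast; ring

lemma Xop_pow (n : ℤ) (hn : n ≤ 0) (m : ℕ) (t : ℕ) :
    (Xop q ^ t) (e (n, m)) = e (n - t, m) := by
  induction t with
  | zero => simp
  | succ t ih =>
    have h : n - (t : ℤ) ≤ 0 := by omega
    rw [pow_succ', Module.End.mul_apply, ih, Xop_e, if_pos h]
    congr 2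
    push_cast; ring

noncomputable def phi (hq0 : q ≠ 0) : RingQuot (QRel K q) →ₗ[K] V K where
  toFun a := rho q hq0 a (e (0, 0))
  map_add' a b := by simp
  map_smul' c a := by simp

lemma phi_bfun (hq0 : q ≠ 0) (p : ℤ × ℕ) : phi q hq0 (bfun q p) = e p := by
  rcases p with ⟨n, m⟩
  by_cases h : 0 ≤ n
  · have : phi q hq0 (bfun q (n, m))
        = (Yop q ^ n.toNat) ((Zop q ^ m) (e ((0 : ℤ), 0))) := by
      simp only [phi, bfun, if_pos h, LinearMap.coe_mk, AddHom.coe_mk, map_mul, map_pow,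
        YA, ZA, rho_Y, rho_Z, Module.End.mul_apply, Module.End.pow_apply]
    rw [this, Zop_pow, Yop_pow q 0 le_rfl, show (0 : ℤ) + ↑n.toNat = n by omega]
  · have : phi q hq0 (bfun q (n, m))
        = (Xop q ^ (-n).toNat) ((Zop q ^ m) (e ((0 : ℤ), 0))) := by
      simp only [phi, bfun, if_neg h, LinearMap.coe_mk, AddHom.coe_mk, map_mul, map_pow,
        XA, ZA, rho_X, rho_Z, Module.End.mul_apply, Module.End.pow_apply]
    rw [this, Zop_pow, Xop_pow q 0 le_rfl, show (0 : ℤ) - ↑(-n).toNat = n by omega]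

noncomputable def psi : V K →ₗ[K] RingQuot (QRel K q) :=
  Finsupp.linearCombination K (bfun q)

lemma phi_psi (hq0 : q ≠ 0) (v : V K) : phi q hq0 (psi q v) = v := by
  induction v using Finsupp.induction_linear with
  | zero => simp
  | add a b ha hb => simp [map_add, ha, hb]
  | single p c =>
    rw [psi, Finsupp.linearCombination_single, map_smul, phi_bfun]
    simp [e, Finsupp.smul_single]

lemma psi_bij (hq0 : q ≠ 0) : Function.Bijective (psi (K := K) q) := by
  constructor
  · intro x y hxy
    have := congrArg (phi q hq0) hxy
    rwa [phi_psi q hq0, phi_psi q hq0] at this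
  · rw [← LinearMap.range_eq_top, psi, Finsupp.range_linearCombination, ← S, S_eq_top q hq0]

noncomputable def theBasis (hq0 : q ≠ 0) : Module.Basis (ℤ × ℕ) K (RingQuot (QRel K q)) :=
  Module.Basis.ofRepr (LinearEquiv.ofBijective (psi q) (psi_bij q hq0)).symm

lemma theBasis_apply (hq0 : q ≠ 0) (p : ℤ × ℕ) : theBasis q hq0 p = bfun q p := by
  have : theBasis q hq0 p
      = (theBasis q hq0).repr.symm (Finsupp.single p 1) := by
    rw [Module.Basis.repr_symm_single_one]
  rw [this]
  show (LinearEquiv.ofBijective (psi q) (psi_bij q hq0)) (Finsupp.single p 1) = bfun q p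
  show psi q (Finsupp.single p 1) = bfun q p
  rw [psi, Finsupp.linearCombination_single, one_smul]

end QProof

/-- the family `b_{n,m} = Y^n Z^m` (`n ≥ 0`), `b_{n,m} = X^{-n} Z^m`
(`n < 0`), indexed by `(n, m) ∈ ℤ × ℕ`, is a `K`-basis of the presented algebra. -/
theorem stmt2 (K : Type) [Field K] (q : K) (hq0 : q ≠ 0)
    (hq : ∀ n : ℕ, 0 < n → q ^ n ≠ 1) :
    letI A := RingQuot (QRel K q)
    letI X : A := RingQuot.mkAlgHom K _ (FreeAlgebra.ι K 0)
    letI Y : A := RingQuot.mkAlgHom K _ (FreeAlgebra.ι K 1)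
    letI Z : A := RingQuot.mkAlgHom K _ (FreeAlgebra.ι K 2)
    ∃ b : Module.Basis (ℤ × ℕ) K A, ∀ (n : ℤ) (m : ℕ),
      b (n, m) = (if 0 ≤ n then Y ^ n.toNat else X ^ (-n).toNat) * Z ^ m := by
  exact ⟨QProof.theBasis q hq0, fun n m => by
    rw [QProof.theBasis_apply]
    simp only [QProof.bfun, QProof.XA, QProof.YA, QProof.ZA]⟩
end

section
/- Let R be a unital commutative ring with 2 invertible and q ∈ R× with q = 1. Then the algebra U(1,R) generated by θ, x, y, z subject to the relations qxθ − q^{-1}θx = qθy − q^{-1}yθ = [2]_q z − θ, θz − zθ = y − x, qzx − q^{-1}xz = qyz − q^{-1}zy = −z, xy + q^2 z^2 = yx + q^{-2} z^2, and x + y + (q − q^{-1})(xy + q^2 z^2) = 0, is isomorphic to the universal enveloping algebra of sl₂(R). -/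
open FreeAlgebra in
/-- Relations of `U(q,R)`: with `θ = ι 0`, `x = ι 1`, `y = ι 2`, `z = ι 3` and
`qi` playing the role of `q⁻¹`:
`qxθ − q⁻¹θx = qθy − q⁻¹yθ = [2]_q z − θ`, `θz − zθ = y − x`,
`qzx − q⁻¹xz = qyz − q⁻¹zy = −z`, `xy + q²z² = yx + q⁻²z²`,
`x + y + (q − q⁻¹)(xy + q²z²) = 0`. -/
inductive URel (R : Type) [CommRing R] (q qi : R) :
    FreeAlgebra R (Fin 4) → FreeAlgebra R (Fin 4) → Prop
  | r1 : URel R q qi (q • (ι R 1 * ι R 0) - qi • (ι R 0 * ι R 1))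
      ((q + qi) • ι R 3 - ι R 0)
  | r2 : URel R q qi (q • (ι R 0 * ι R 2) - qi • (ι R 2 * ι R 0))
      ((q + qi) • ι R 3 - ι R 0)
  | r3 : URel R q qi (ι R 0 * ι R 3 - ι R 3 * ι R 0) (ι R 2 - ι R 1)
  | r4 : URel R q qi (q • (ι R 3 * ι R 1) - qi • (ι R 1 * ι R 3)) (-ι R 3)
  | r5 : URel R q qi (q • (ι R 2 * ι R 3) - qi • (ι R 3 * ι R 2)) (-ι R 3)
  | r6 : URel R q qi (ι R 1 * ι R 2 + (q * q) • (ι R 3 * ι R 3))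
      (ι R 2 * ι R 1 + (qi * qi) • (ι R 3 * ι R 3))
  | r7 : URel R q qi
      (ι R 1 + ι R 2 + (q - qi) • (ι R 1 * ι R 2 + (q * q) • (ι R 3 * ι R 3))) 0

namespace Stmt5Aux

open LieAlgebra.SpecialLinear

variable (R : Type) [CommRing R]

attribute [local instance 100] LieRing.ofAssociativeRing

/-! ### sl₂ basis -/

def Hsl : sl (Fin 2) R :=
  ⟨!![1, 0; 0, -1], show _ ∈ LinearMap.ker _ by
    simp [LinearMap.mem_ker, Matrix.trace_fin_two]⟩

def Esl : sl (Fin 2) R := LieAlgebra.SpecialLinear.single 0 1 (by decide) (1:R)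
def Fsl : sl (Fin 2) R := LieAlgebra.SpecialLinear.single 1 0 (by decide) (1:R)

lemma esl_val : (Esl R).val = !![0,1;0,0] := by
  ext i j; fin_cases i <;> fin_cases j <;> simp [Esl, Matrix.single]
lemma fsl_val : (Fsl R).val = !![0,0;1,0] := by
  ext i j; fin_cases i <;> fin_cases j <;> simp [Fsl, Matrix.single]

lemma brHE : ⁅Hsl R, Esl R⁆ = (2:R) • Esl R := by
  apply Subtype.ext
  show (Hsl R).val * (Esl R).val - (Esl R).val * (Hsl R).val = (2:R) • (Esl R).val
  rw [esl_val]
  ext i j; fin_cases i <;> fin_cases j <;>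
    simp [Hsl, Matrix.mul_apply, Matrix.vecMul, dotProduct, Fin.sum_univ_two] <;> ring

lemma brHF : ⁅Hsl R, Fsl R⁆ = (-2:R) • Fsl R := by
  apply Subtype.ext
  show (Hsl R).val * (Fsl R).val - (Fsl R).val * (Hsl R).val = (-2:R) • (Fsl R).val
  rw [fsl_val]
  ext i j; fin_cases i <;> fin_cases j <;>
    simp [Hsl, Matrix.mul_apply, Matrix.vecMul, dotProduct, Fin.sum_univ_two] <;> ring

lemma brEF : ⁅Esl R, Fsl R⁆ = Hsl R := by
  apply Subtype.ext
  show (Esl R).val * (Fsl R).val - (Fsl R).val * (Esl R).val = (Hsl R).val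
  rw [esl_val, fsl_val]
  ext i j; fin_cases i <;> fin_cases j <;>
    simp [Hsl, Matrix.mul_apply, Matrix.vecMul, dotProduct, Fin.sum_univ_two]

lemma brkt_expand {A : Type} [Ring A] [Algebra R A]
    (H E F : A) (a b c a' b' c' : R)
    (hHE : H * E - E * H = (2:R) • E)
    (hHF : H * F - F * H = (-2:R) • F)
    (hEF : E * F - F * E = H) :
    (a•H + b•E + c•F) * (a'•H + b'•E + c'•F) - (a'•H + b'•E + c'•F) * (a•H + b•E + c•F)
      = (b*c' - b'*c) • H + (2*(a*b' - a'*b)) • E + (2*(c*a' - c'*a)) • F := by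
  have e1 : E * H = H * E - (2:R) • E := by
    have := hHE; linear_combination (norm := abel_nf) -this
  have e2 : F * H = H * F - (-2:R) • F := by
    have := hHF; linear_combination (norm := abel_nf) -this
  have e3 : F * E = E * F - H := by
    have := hEF; linear_combination (norm := abel_nf) -this
  simp only [mul_add, add_mul, smul_mul_assoc, mul_smul_comm, e1, e2, e3]
  module

/-! ### the forward map -/

local notation "UEA" => UniversalEnvelopingAlgebra R (sl (Fin 2) R)

noncomputable def uH : UEA := UniversalEnvelopingAlgebra.ι R (Hsl R)
noncomputable def uE : UEA := UniversalEnvelopingAlgebra.ι R (Esl R)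
noncomputable def uF : UEA := UniversalEnvelopingAlgebra.ι R (Fsl R)

lemma uHE : uH R * uE R - uE R * uH R = (2:R) • uE R := by
  have h := (UniversalEnvelopingAlgebra.ι R).map_lie (Hsl R) (Esl R)
  rw [Ring.lie_def, brHE, map_smul] at h
  exact h.symm

lemma uHF : uH R * uF R - uF R * uH R = (-2:R) • uF R := by
  have h := (UniversalEnvelopingAlgebra.ι R).map_lie (Hsl R) (Fsl R)
  rw [Ring.lie_def, brHF, map_smul] at h
  exact h.symm

lemma uEF : uE R * uF R - uF R * uE R = uH R := by
  have h := (UniversalEnvelopingAlgebra.ι R).map_lie (Esl R) (Fsl R)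
  rw [Ring.lie_def, brEF] at h
  exact h.symm

noncomputable def genImg (r : R) : Fin 4 → UEA :=
  ![uE R + uF R, r • uH R, -(r • uH R), uE R]

noncomputable def toUEA (r : R) : FreeAlgebra R (Fin 4) →ₐ[R] UEA :=
  FreeAlgebra.lift R (genImg R r)

lemma rel_sound (r : R) (hr : 2 * r = 1) :
    ∀ ⦃a b⦄, URel R 1 1 a b → toUEA R r a = toUEA R r b := by
  have e1 : uE R * uH R = uH R * uE R - (2:R) • uE R := by
    have := uHE R; linear_combination (norm := abel_nf) -this
  have e2 : uF R * uH R = uH R * uF R - (-2:R) • uF R := by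
    have := uHF R; linear_combination (norm := abel_nf) -this
  have e3 : uF R * uE R = uE R * uF R - uH R := by
    have := uEF R; linear_combination (norm := abel_nf) -this
  intro a b h
  cases h <;>
    simp only [toUEA, map_sub, map_add, map_mul, map_smul, map_neg, map_zero,
      FreeAlgebra.lift_ι_apply, genImg, Matrix.cons_val_zero, Matrix.cons_val_one,
      Matrix.head_cons, Matrix.cons_val_two, Matrix.tail_cons, Matrix.cons_val_three,
      one_smul] <;>
    simp only [mul_add, add_mul, smul_mul_assoc, mul_smul_comm, neg_mul, mul_neg,
      smul_neg, neg_neg, e1, e2, e3] <;>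
    match_scalars <;>
    first
      | ring1
      | linear_combination hr
      | linear_combination -hr
      | linear_combination 2*hr
      | linear_combination -2*hr
      | linear_combination r*hr
      | linear_combination -r*hr

/-! ### the RingQuot side -/

local notation "Uq" => RingQuot (URel R 1 1)

noncomputable def Θq : Uq := RingQuot.mkAlgHom R (URel R 1 1) (FreeAlgebra.ι R 0)
noncomputable def Xq : Uq := RingQuot.mkAlgHom R (URel R 1 1) (FreeAlgebra.ι R 1)
noncomputable def Yq : Uq := RingQuot.mkAlgHom R (URel R 1 1) (FreeAlgebra.ι R 2)
noncomputable def Zq : Uq := RingQuot.mkAlgHom R (URel R 1 1) (FreeAlgebra.ι R 3)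

noncomputable def Hq : Uq := (2:R) • Xq R
noncomputable def Eq' : Uq := Zq R
noncomputable def Fq : Uq := Θq R - Zq R

lemma q_r1 : Xq R * Θq R - Θq R * Xq R = (2:R) • Zq R - Θq R := by
  have h := RingQuot.mkAlgHom_rel R (URel.r1 (R := R) (q := 1) (qi := 1))
  simpa [Θq, Xq, Zq, one_add_one_eq_two] using h

lemma q_r3 : Θq R * Zq R - Zq R * Θq R = Yq R - Xq R := by
  have h := RingQuot.mkAlgHom_rel R (URel.r3 (R := R) (q := 1) (qi := 1))
  simpa [Θq, Xq, Yq, Zq] using h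

lemma q_r4 : Zq R * Xq R - Xq R * Zq R = -Zq R := by
  have h := RingQuot.mkAlgHom_rel R (URel.r4 (R := R) (q := 1) (qi := 1))
  simpa [Xq, Zq] using h

lemma q_y : Yq R = -Xq R := by
  have h := RingQuot.mkAlgHom_rel R (URel.r7 (R := R) (q := 1) (qi := 1))
  simp only [map_add, map_smul, map_mul, map_zero, sub_self, zero_smul, add_zero] at h
  have h' : Xq R + Yq R = 0 := by simpa [Θq, Xq, Yq, Zq] using h
  exact eq_neg_of_add_eq_zero_right h'

lemma q_xz : Xq R * Zq R - Zq R * Xq R = Zq R := by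
  have h := q_r4 R
  linear_combination (norm := abel_nf) -h

lemma qHE : Hq R * Eq' R - Eq' R * Hq R = (2:R) • Eq' R := by
  have h := q_xz R
  simp only [Hq, Eq', smul_mul_assoc, mul_smul_comm]
  linear_combination (norm := module) (2:R) • h

lemma qEF : Eq' R * Fq R - Fq R * Eq' R = Hq R := by
  have h3 := q_r3 R
  have hy := q_y R
  rw [hy] at h3
  simp only [Eq', Fq, Hq, mul_sub, sub_mul]
  have h2 : (2:R) • Xq R = Xq R + Xq R := two_smul R _
  linear_combination (norm := abel_nf) -h3 - h2

lemma qHF : Hq R * Fq R - Fq R * Hq R = (-2:R) • Fq R := by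
  have h1 := q_r1 R
  have h := q_xz R
  simp only [Hq, Fq, mul_sub, sub_mul, smul_mul_assoc, mul_smul_comm, smul_sub]
  linear_combination (norm := module) (2:R) • h1 - (2:R) • h

lemma sl_trace (M : sl (Fin 2) R) : M.val 0 0 + M.val 1 1 = 0 := by
  have h : Matrix.trace M.val = 0 := LinearMap.mem_ker.mp M.2
  rwa [Matrix.trace_fin_two] at h

noncomputable def ψlin : sl (Fin 2) R →ₗ[R] Uq where
  toFun M := M.val 0 0 • Hq R + M.val 0 1 • Eq' R + M.val 1 0 • Fq R
  map_add' M N := by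
    have hc : ((M + N) : sl (Fin 2) R).val = M.val + N.val := rfl
    simp only [hc, Matrix.add_apply, add_smul]
    abel
  map_smul' t M := by
    have hc : ((t • M) : sl (Fin 2) R).val = t • M.val := rfl
    simp only [hc, Matrix.smul_apply, smul_eq_mul, RingHom.id_apply, smul_add, mul_smul]

noncomputable def ψ₀ : sl (Fin 2) R →ₗ⁅R⁆ Uq :=
  { ψlin R with
    map_lie' := by
      intro M N
      show (⁅M, N⁆ : sl (Fin 2) R).val 0 0 • Hq R + (⁅M, N⁆ : sl (Fin 2) R).val 0 1 • Eq' R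
          + (⁅M, N⁆ : sl (Fin 2) R).val 1 0 • Fq R = _
      have hM := sl_trace R M
      have hN := sl_trace R N
      have hbr : (⁅M, N⁆ : sl (Fin 2) R).val = M.val * N.val - N.val * M.val := rfl
      rw [Ring.lie_def]
      show _ = ψlin R M * ψlin R N - ψlin R N * ψlin R M
      show _ = (M.val 0 0 • Hq R + M.val 0 1 • Eq' R + M.val 1 0 • Fq R) *
            (N.val 0 0 • Hq R + N.val 0 1 • Eq' R + N.val 1 0 • Fq R) -
          (N.val 0 0 • Hq R + N.val 0 1 • Eq' R + N.val 1 0 • Fq R) *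
            (M.val 0 0 • Hq R + M.val 0 1 • Eq' R + M.val 1 0 • Fq R)
      rw [brkt_expand R (Hq R) (Eq' R) (Fq R) _ _ _ _ _ _ (qHE R) (qHF R) (qEF R)]
      simp only [hbr, Matrix.sub_apply, Matrix.mul_apply, Fin.sum_univ_two]
      have h11M : M.val 1 1 = -(M.val 0 0) := by linear_combination hM
      have h11N : N.val 1 1 = -(N.val 0 0) := by linear_combination hN
      rw [h11M, h11N]
      match_scalars <;> ring }

noncomputable def ψ : UniversalEnvelopingAlgebra R (sl (Fin 2) R) →ₐ[R] Uq :=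
  UniversalEnvelopingAlgebra.lift R (ψ₀ R)

noncomputable def φ (r : R) (hr : 2 * r = 1) : Uq →ₐ[R] UniversalEnvelopingAlgebra R (sl (Fin 2) R) :=
  RingQuot.liftAlgHom R ⟨toUEA R r, rel_sound R r hr⟩

lemma sl_decomp (M : sl (Fin 2) R) :
    M = M.val 0 0 • Hsl R + M.val 0 1 • Esl R + M.val 1 0 • Fsl R := by
  have hM := sl_trace R M
  apply Subtype.ext
  have hc : ((M.val 0 0 • Hsl R + M.val 0 1 • Esl R + M.val 1 0 • Fsl R) : sl (Fin 2) R).val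
      = M.val 0 0 • (Hsl R).val + M.val 0 1 • (Esl R).val + M.val 1 0 • (Fsl R).val := rfl
  show M.val = _
  rw [hc, esl_val, fsl_val]
  ext i j
  fin_cases i <;> fin_cases j <;>
    simp [Hsl] <;>
    first
      | rfl
      | linear_combination hM
      | linear_combination -hM

lemma φ_Θ (r : R) (hr : 2 * r = 1) : φ R r hr (Θq R) = uE R + uF R := by
  simp [φ, Θq, RingQuot.liftAlgHom_mkAlgHom_apply, toUEA, FreeAlgebra.lift_ι_apply, genImg]

lemma φ_X (r : R) (hr : 2 * r = 1) : φ R r hr (Xq R) = r • uH R := by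
  simp [φ, Xq, RingQuot.liftAlgHom_mkAlgHom_apply, toUEA, FreeAlgebra.lift_ι_apply, genImg]

lemma φ_Y (r : R) (hr : 2 * r = 1) : φ R r hr (Yq R) = -(r • uH R) := by
  simp [φ, Yq, RingQuot.liftAlgHom_mkAlgHom_apply, toUEA, FreeAlgebra.lift_ι_apply, genImg]

lemma φ_Z (r : R) (hr : 2 * r = 1) : φ R r hr (Zq R) = uE R := by
  simp [φ, Zq, RingQuot.liftAlgHom_mkAlgHom_apply, toUEA, FreeAlgebra.lift_ι_apply, genImg]

lemma ψ_apply (M : sl (Fin 2) R) : ψ R (UniversalEnvelopingAlgebra.ι R M)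
    = M.val 0 0 • Hq R + M.val 0 1 • Eq' R + M.val 1 0 • Fq R := by
  show (UniversalEnvelopingAlgebra.lift R (ψ₀ R)) (UniversalEnvelopingAlgebra.ι R M) = _
  rw [UniversalEnvelopingAlgebra.lift_ι_apply]
  rfl

lemma ψ_uH : ψ R (uH R) = Hq R := by
  rw [uH, ψ_apply]
  have h0 : (Hsl R).val 0 0 = 1 := rfl
  have h1 : (Hsl R).val 0 1 = 0 := rfl
  have h2 : (Hsl R).val 1 0 = 0 := rfl
  rw [h0, h1, h2]; simp

lemma ψ_uE : ψ R (uE R) = Eq' R := by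
  rw [uE, ψ_apply, esl_val]
  norm_num

lemma ψ_uF : ψ R (uF R) = Fq R := by
  rw [uF, ψ_apply, fsl_val]
  norm_num

end Stmt5Aux

attribute [local instance 100] LieRing.ofAssociativeRing

/-- for `q = 1`, the algebra `U(1,R)` is isomorphic (as an `R`-algebra)
to the universal enveloping algebra of `sl₂(R)`. -/
theorem stmt5 (R : Type) [CommRing R] (h2 : IsUnit (2 : R)) :
    Nonempty (RingQuot (URel R 1 1) ≃ₐ[R]
      UniversalEnvelopingAlgebra R (LieAlgebra.SpecialLinear.sl (Fin 2) R)) := by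
  open Stmt5Aux in
  refine ?_
  set r : R := ↑h2.unit⁻¹ with hrdef
  have hr : 2 * r = 1 := by
    have h := h2.unit.mul_inv
    rwa [IsUnit.unit_spec] at h
  refine ⟨AlgEquiv.ofAlgHom (φ R r hr) (ψ R) ?_ ?_⟩
  · apply UniversalEnvelopingAlgebra.hom_ext
    apply LieHom.ext
    intro M
    show φ R r hr (ψ R (UniversalEnvelopingAlgebra.ι R M)) = UniversalEnvelopingAlgebra.ι R M
    rw [ψ_apply, map_add, map_add, map_smul, map_smul, map_smul]
    have hH : φ R r hr (Hq R) = uH R := by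
      rw [Hq, map_smul, φ_X, smul_smul, hr, one_smul]
    have hE : φ R r hr (Eq' R) = uE R := by rw [Eq', φ_Z]
    have hF : φ R r hr (Fq R) = uF R := by
      rw [Fq, map_sub, φ_Θ, φ_Z]; abel
    rw [hH, hE, hF]
    conv_rhs => rw [sl_decomp R M]
    simp only [map_add, map_smul]
    rfl
  · apply RingQuot.ringQuot_ext'
    apply FreeAlgebra.hom_ext
    funext i
    have hΘ : ψ R (φ R r hr (Θq R)) = Θq R := by
      rw [φ_Θ, map_add, ψ_uE, ψ_uF, Eq', Fq]; abel
    have hX : ψ R (φ R r hr (Xq R)) = Xq R := by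
      rw [φ_X, map_smul, ψ_uH, Hq, smul_smul, mul_comm, hr, one_smul]
    have hY : ψ R (φ R r hr (Yq R)) = Yq R := by
      rw [φ_Y, map_neg, map_smul, ψ_uH, Hq, smul_smul, mul_comm, hr, one_smul, ← q_y]
    have hZ : ψ R (φ R r hr (Zq R)) = Zq R := by
      rw [φ_Z, ψ_uE, Eq']
    fin_cases i
    · exact hΘ
    · exact hX
    · exact hY
    · exact hZ
end

section
/- In U(q,R) with a = y − x and b = −xy − q^2 z^2, the following identities hold: (q − q^{-1})^2 b^2 − a^2 + 2(q^2 + q^{-2}) z^2 = −4b, and (q − q^{-1})(ab − ba) = 2(q^2 − q^{-2}) z^2. -/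
/-- in `U(q,R)`, with `a = y − x` and `b = −xy − q²z²`:
`(q − q⁻¹)²b² − a² + 2(q² + q⁻²)z² = −4b` and `(q − q⁻¹)(ab − ba) = 2(q² − q⁻²)z²`. -/
theorem stmt7 (R : Type) [CommRing R] (h2 : IsUnit (2 : R))
    (q qi : R) (hqi : q * qi = 1) :
    letI A := RingQuot (URel R q qi)
    letI θ : A := RingQuot.mkAlgHom R _ (FreeAlgebra.ι R 0)
    letI x : A := RingQuot.mkAlgHom R _ (FreeAlgebra.ι R 1)
    letI y : A := RingQuot.mkAlgHom R _ (FreeAlgebra.ι R 2)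
    letI z : A := RingQuot.mkAlgHom R _ (FreeAlgebra.ι R 3)
    letI a : A := y - x
    letI b : A := -(x * y) - (q * q) • (z * z)
    ((q - qi) * (q - qi)) • (b * b) - a * a
        + (2 * (q * q + qi * qi)) • (z * z) = -(4 • b) ∧
    (q - qi) • (a * b - b * a) = (2 * (q * q - qi * qi)) • (z * z) := by
  set x : RingQuot (URel R q qi) := RingQuot.mkAlgHom R _ (FreeAlgebra.ι R 1) with hxdef
  set y : RingQuot (URel R q qi) := RingQuot.mkAlgHom R _ (FreeAlgebra.ι R 2) with hydef
  set z : RingQuot (URel R q qi) := RingQuot.mkAlgHom R _ (FreeAlgebra.ι R 3) with hzdef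
  set a : RingQuot (URel R q qi) := y - x with ha
  set b : RingQuot (URel R q qi) := -(x * y) - (q * q) • (z * z) with hb
  have hq : qi * q = 1 := by rw [mul_comm]; exact hqi
  have e4 : q • (z * x) - qi • (x * z) = -z := by
    have h := RingQuot.mkAlgHom_rel R (URel.r4 (R := R) (q := q) (qi := qi))
    simpa only [map_sub, map_smul, map_mul, map_neg] using h
  have e5 : q • (y * z) - qi • (z * y) = -z := by
    have h := RingQuot.mkAlgHom_rel R (URel.r5 (R := R) (q := q) (qi := qi))
    simpa only [map_sub, map_smul, map_mul, map_neg] using h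
  have e6 : x * y + (q * q) • (z * z) = y * x + (qi * qi) • (z * z) := by
    have h := RingQuot.mkAlgHom_rel R (URel.r6 (R := R) (q := q) (qi := qi))
    simpa only [map_add, map_smul, map_mul] using h
  have e7 : x + y + (q - qi) • (x * y + (q * q) • (z * z)) = 0 := by
    have h := RingQuot.mkAlgHom_rel R (URel.r7 (R := R) (q := q) (qi := qi))
    simpa only [map_add, map_smul, map_mul, map_zero] using h
  clear_value b a x y z
  -- x + y = (q - qi) • b
  have e7' : x + y = (q - qi) • b := by
    have h := eq_neg_of_add_eq_zero_left e7
    rw [hb, h]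
    module
  have hxy : x * y = -b - (q * q) • (z * z) := by
    rw [hb]; module
  have hyx : y * x = -b - (qi * qi) • (z * z) := by
    have h : y * x = x * y + (q * q) • (z * z) - (qi * qi) • (z * z) := by
      rw [e6]; module
    rw [h, hxy]; module
  have e6' : y * x = x * y + (q * q - qi * qi) • (z * z) := by
    rw [hxy, hyx]; module
  -- y z = qi² z y - qi z
  have e5' : y * z = (qi * qi) • (z * y) - qi • z := by
    have h : qi • (q • (y * z) - qi • (z * y)) = qi • (-z) := by rw [e5]
    rw [smul_sub, smul_smul, smul_smul, hq, one_smul, smul_neg,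
      sub_eq_iff_eq_add] at h
    rw [h]; module
  -- first identity
  have h1 : ((q - qi) * (q - qi)) • (b * b) = (x + y) * (x + y) := by
    rw [e7', smul_mul_smul_comm]
  have hb2 : b = -(x * y) - (q * q) • (z * z) := by rw [hb]
  have h2 : (x + y) * (x + y) - (y - x) * (y - x) = x * y + y * x + (x * y + y * x) := by
    rw [add_mul, mul_add, mul_add, sub_mul, mul_sub, mul_sub]
    abel
  have nsm4 : (4 : ℕ) • b = (4 : R) • b := by
    rw [← Nat.cast_smul_eq_nsmul R]; norm_num
  constructor
  · rw [h1, ha, h2, hxy, hyx, nsm4]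
    module
  · have hbc : (x + y) * b = b * (x + y) := by
      rw [e7', smul_mul_assoc, mul_smul_comm]
    have key : y * b - b * y = (q + qi) • (z * z) := by
      have k1 : y * (x * y) = x * y * y + (q * q - qi * qi) • (z * z * y) := by
        rw [← mul_assoc, e6', add_mul, smul_mul_assoc, mul_assoc]
      have k2 : y * (z * z) = (qi * qi * (qi * qi)) • (z * z * y)
          - (qi * qi * qi + qi) • (z * z) := by
        calc y * (z * z) = (y * z) * z := (mul_assoc y z z).symm
          _ = ((qi * qi) • (z * y) - qi • z) * z := by rw [e5']
          _ = (qi * qi) • ((z * y) * z) - qi • (z * z) := by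
              rw [sub_mul, smul_mul_assoc, smul_mul_assoc]
          _ = (qi * qi) • (z * (y * z)) - qi • (z * z) := by rw [mul_assoc]
          _ = (qi * qi) • (z * ((qi * qi) • (z * y) - qi • z)) - qi • (z * z) := by
              rw [e5']
          _ = (qi * qi) • ((qi * qi) • (z * (z * y)) - qi • (z * z)) - qi • (z * z) := by
              rw [mul_sub, mul_smul_comm, mul_smul_comm]
          _ = _ := by rw [← mul_assoc z z y]; module
      have t1 : y * b = -(y * (x * y)) - (q * q) • (y * (z * z)) := by
        rw [hb2, mul_sub, mul_smul_comm]
        exact congrArg (fun t => t - (q * q) • (y * (z * z))) (mul_neg y (x * y))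
      have t2 : b * y = -(x * y * y) - (q * q) • (z * z * y) := by
        rw [hb2, sub_mul, smul_mul_assoc]
        exact congrArg (fun t => t - (q * q) • (z * z * y)) (neg_mul (x * y) y)
      rw [t1, t2, k1, k2]
      match_scalars
      · ring
      · linear_combination (-(q * q * qi * qi) - q * qi - q * qi * qi * qi - qi * qi + q * qi * (q * qi + 1)) * hqi
      · linear_combination (2 + q + qi * (q * qi + 1) - (q * q * qi * qi + q * qi + 1) + (q * qi * (q * qi) + q * qi - 1)) * hqi
    have habba : a * b - b * a
        = (2 : R) • (y * b - b * y) - ((x + y) * b - b * (x + y)) := by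
      rw [ha, sub_mul, mul_sub, add_mul, mul_add, smul_sub, two_smul, two_smul]
      abel
    rw [habba, hbc, sub_self, sub_zero, key, smul_smul, smul_smul,
      show (q - qi) * 2 * (q + qi) = 2 * (q * q - qi * qi) from by ring]
end

section
/- Let q ∈ K× be not a root of unity. In the algebra U_q(g) generated by X, Y, Z, θ with the relations XZ = q^2ZX, ZY = q^2YZ, XY + q^2Z^2 = 1, YX + q^{-2}Z^2 = 1, qXθ − q^{-1}θX = qθY − q^{-1}Yθ = [2]_q Z, θZ − Zθ = Y − X, the element Ω = qX + q^{-1}Y + (q − q^{-1})θZ is central. -/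
open FreeAlgebra in
/-- Relations of `U_q(g)`: with `X = ι 0`, `Y = ι 1`, `Z = ι 2`, `θ = ι 3`:
`XZ = q²ZX`, `ZY = q²YZ`, `XY + q²Z² = 1`, `YX + q⁻²Z² = 1`,
`qXθ − q⁻¹θX = qθY − q⁻¹Yθ = [2]_q Z`, `θZ − Zθ = Y − X`. -/
inductive GRel (K : Type) [Field K] (q : K) :
    FreeAlgebra K (Fin 4) → FreeAlgebra K (Fin 4) → Prop
  | xz : GRel K q (ι K 0 * ι K 2) (q ^ 2 • (ι K 2 * ι K 0))
  | zy : GRel K q (ι K 2 * ι K 1) (q ^ 2 • (ι K 1 * ι K 2))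
  | unit1 : GRel K q (ι K 0 * ι K 1 + q ^ 2 • (ι K 2 * ι K 2)) 1
  | unit2 : GRel K q (ι K 1 * ι K 0 + (q ^ 2)⁻¹ • (ι K 2 * ι K 2)) 1
  | xθ : GRel K q (q • (ι K 0 * ι K 3) - q⁻¹ • (ι K 3 * ι K 0)) ((q + q⁻¹) • ι K 2)
  | θy : GRel K q (q • (ι K 3 * ι K 1) - q⁻¹ • (ι K 1 * ι K 3)) ((q + q⁻¹) • ι K 2)
  | θz : GRel K q (ι K 3 * ι K 2 - ι K 2 * ι K 3) (ι K 1 - ι K 0)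

/-- the element `Ω = qX + q⁻¹Y + (q − q⁻¹)θZ` is central in `U_q(g)`. -/
theorem stmt8 (K : Type) [Field K] (q : K) (hq0 : q ≠ 0)
    (hq : ∀ n : ℕ, 0 < n → q ^ n ≠ 1) :
    letI A := RingQuot (GRel K q)
    letI X : A := RingQuot.mkAlgHom K _ (FreeAlgebra.ι K 0)
    letI Y : A := RingQuot.mkAlgHom K _ (FreeAlgebra.ι K 1)
    letI Z : A := RingQuot.mkAlgHom K _ (FreeAlgebra.ι K 2)
    letI θ : A := RingQuot.mkAlgHom K _ (FreeAlgebra.ι K 3)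
    letI Ω : A := q • X + q⁻¹ • Y + (q - q⁻¹) • (θ * Z)
    ∀ u : A, Ω * u = u * Ω := by
  set X := RingQuot.mkAlgHom K (GRel K q) (FreeAlgebra.ι K 0) with hX
  set Y := RingQuot.mkAlgHom K (GRel K q) (FreeAlgebra.ι K 1) with hY
  set Z := RingQuot.mkAlgHom K (GRel K q) (FreeAlgebra.ι K 2) with hZ
  set θ := RingQuot.mkAlgHom K (GRel K q) (FreeAlgebra.ι K 3) with hθ
  set Ω := q • X + q⁻¹ • Y + (q - q⁻¹) • (θ * Z) with hΩ
  have hxz : X * Z = q ^ 2 • (Z * X) := by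
    simpa only [map_mul, map_smul] using RingQuot.mkAlgHom_rel K (GRel.xz (K := K) (q := q))
  have hzy : Z * Y = q ^ 2 • (Y * Z) := by
    simpa only [map_mul, map_smul] using RingQuot.mkAlgHom_rel K (GRel.zy (K := K) (q := q))
  have hu1 : X * Y + q ^ 2 • (Z * Z) = 1 := by
    simpa only [map_mul, map_smul, map_add, map_one] using
      RingQuot.mkAlgHom_rel K (GRel.unit1 (K := K) (q := q))
  have hu2 : Y * X + (q ^ 2)⁻¹ • (Z * Z) = 1 := by
    simpa only [map_mul, map_smul, map_add, map_one] using
      RingQuot.mkAlgHom_rel K (GRel.unit2 (K := K) (q := q))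
  have hxθ : q • (X * θ) - q⁻¹ • (θ * X) = (q + q⁻¹) • Z := by
    simpa only [map_mul, map_smul, map_sub] using
      RingQuot.mkAlgHom_rel K (GRel.xθ (K := K) (q := q))
  have hθy : q • (θ * Y) - q⁻¹ • (Y * θ) = (q + q⁻¹) • Z := by
    simpa only [map_mul, map_smul, map_sub] using
      RingQuot.mkAlgHom_rel K (GRel.θy (K := K) (q := q))
  have hθz : θ * Z - Z * θ = Y - X := by
    simpa only [map_mul, map_sub] using
      RingQuot.mkAlgHom_rel K (GRel.θz (K := K) (q := q))
  have z1 : X * Z - q ^ 2 • (Z * X) = 0 := sub_eq_zero_of_eq hxz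
  have z2 : Z * Y - q ^ 2 • (Y * Z) = 0 := sub_eq_zero_of_eq hzy
  have z3 : X * Y + q ^ 2 • (Z * Z) - 1 = 0 := sub_eq_zero_of_eq hu1
  have z4 : Y * X + (q ^ 2)⁻¹ • (Z * Z) - 1 = 0 := sub_eq_zero_of_eq hu2
  have z5 : q • (X * θ) - q⁻¹ • (θ * X) - (q + q⁻¹) • Z = 0 := sub_eq_zero_of_eq hxθ
  have z6 : q • (θ * Y) - q⁻¹ • (Y * θ) - (q + q⁻¹) • Z = 0 := sub_eq_zero_of_eq hθy
  have z7 : θ * Z - Z * θ - (Y - X) = 0 := sub_eq_zero_of_eq hθz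
  have cZ : Ω * Z = Z * Ω := by
    rw [← sub_eq_zero]
    have key : Ω * Z - Z * Ω =
        q⁻¹ • (X * Z - q ^ 2 • (Z * X)) - q⁻¹ • (Z * Y - q ^ 2 • (Y * Z))
          + (q - q⁻¹) • ((θ * Z - Z * θ - (Y - X)) * Z) := by
      rw [hΩ]
      simp only [mul_add, add_mul, mul_sub, sub_mul, smul_mul_assoc, mul_smul_comm,
        smul_sub, smul_add, smul_smul, mul_assoc]
      match_scalars <;> field_simp <;> ring
    rw [key, z1, z2, z7]
    simp
  have cX : Ω * X = X * Ω := by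
    rw [← sub_eq_zero]
    have key : Ω * X - X * Ω =
        q⁻¹ • (Y * X + (q ^ 2)⁻¹ • (Z * Z) - 1) - q⁻¹ • (X * Y + q ^ 2 • (Z * Z) - 1)
          - ((q - q⁻¹) * (q ^ 2)⁻¹) • (θ * (X * Z - q ^ 2 • (Z * X)))
          - ((q - q⁻¹) * q⁻¹) • ((q • (X * θ) - q⁻¹ • (θ * X) - (q + q⁻¹) • Z) * Z) := by
      rw [hΩ]
      simp only [mul_add, add_mul, mul_sub, sub_mul, smul_mul_assoc, mul_smul_comm,
        smul_sub, smul_add, smul_smul, mul_assoc, mul_one, one_mul]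
      match_scalars <;> field_simp <;> ring
    rw [key, z1, z3, z4, z5]
    simp
  have cY : Ω * Y = Y * Ω := by
    rw [← sub_eq_zero]
    have key : Ω * Y - Y * Ω =
        q • (X * Y + q ^ 2 • (Z * Z) - 1) - q • (Y * X + (q ^ 2)⁻¹ • (Z * Z) - 1)
          + (q - q⁻¹) • (θ * (Z * Y - q ^ 2 • (Y * Z)))
          + ((q - q⁻¹) * q) • ((q • (θ * Y) - q⁻¹ • (Y * θ) - (q + q⁻¹) • Z) * Z) := by
      rw [hΩ]
      simp only [mul_add, add_mul, mul_sub, sub_mul, smul_mul_assoc, mul_smul_comm,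
        smul_sub, smul_add, smul_smul, mul_assoc, mul_one, one_mul]
      match_scalars <;> field_simp <;> ring
    rw [key, z2, z3, z4, z6]
    simp
  have cθ : Ω * θ = θ * Ω := by
    rw [← sub_eq_zero]
    have key : Ω * θ - θ * Ω =
        (q • (X * θ) - q⁻¹ • (θ * X) - (q + q⁻¹) • Z)
          - (q • (θ * Y) - q⁻¹ • (Y * θ) - (q + q⁻¹) • Z)
          - (q - q⁻¹) • (θ * (θ * Z - Z * θ - (Y - X))) := by
      rw [hΩ]
      simp only [mul_add, add_mul, mul_sub, sub_mul, smul_mul_assoc, mul_smul_comm,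
        smul_sub, smul_add, smul_smul, mul_assoc, mul_one, one_mul]
      match_scalars <;> field_simp <;> ring
    rw [key, z5, z6, z7]
    simp
  intro u
  obtain ⟨a, rfl⟩ := RingQuot.mkAlgHom_surjective K (GRel K q) u
  induction a using FreeAlgebra.induction with
  | grade0 r => rw [AlgHom.commutes]; exact (Algebra.commutes r Ω).symm
  | grade1 i =>
      fin_cases i
      · exact cX
      · exact cY
      · exact cZ
      · exact cθ
  | mul a b ha hb => rw [map_mul, ← mul_assoc, ha, mul_assoc, hb, mul_assoc]
  | add a b ha hb => rw [map_add, mul_add, ha, hb, add_mul]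
end

section
/- For q ∈ K× not a root of unity and n ∈ ℤ, define T_n^± = q^{±n} X − q^{∓n} Y ∓ [2]_q Z and T_n = q^{-1} X + q Y + (q^n − q^{-n}) Z in U_q(g). Then T_{n+2}^- T_n^+ = T_n^2 − (q^{n+1} + q^{-n-1})^2 and T_{n-2}^+ T_n^- = T_n^2 − (q^{n-1} + q^{-n+1})^2. -/
/-- with `T_n^± = q^{±n}X − q^{∓n}Y ∓ [2]_q Z` and
`T_n = q⁻¹X + qY + (q^n − q^{-n})Z`, one has
`T_{n+2}^- T_n^+ = T_n² − {n+1}_q²` and `T_{n-2}^+ T_n^- = T_n² − {n-1}_q²`,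
where `{m}_q = q^m + q^{-m}`. -/
theorem stmt10 (K : Type) [Field K] (q : K) (hq0 : q ≠ 0)
    (hq : ∀ n : ℕ, 0 < n → q ^ n ≠ 1) (n : ℤ) :
    letI A := RingQuot (GRel K q)
    letI X : A := RingQuot.mkAlgHom K _ (FreeAlgebra.ι K 0)
    letI Y : A := RingQuot.mkAlgHom K _ (FreeAlgebra.ι K 1)
    letI Z : A := RingQuot.mkAlgHom K _ (FreeAlgebra.ι K 2)
    letI Tp : ℤ → A := fun m => q ^ m • X - q ^ (-m) • Y - (q + q⁻¹) • Z
    letI Tm : ℤ → A := fun m => q ^ (-m) • X - q ^ m • Y + (q + q⁻¹) • Z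
    letI T : ℤ → A := fun m => q⁻¹ • X + q • Y + (q ^ m - q ^ (-m)) • Z
    Tm (n + 2) * Tp n = T n ^ 2 - algebraMap K A ((q ^ (n + 1) + q ^ (-(n + 1))) ^ 2) ∧
    Tp (n - 2) * Tm n = T n ^ 2 - algebraMap K A ((q ^ (n - 1) + q ^ (-(n - 1))) ^ 2) := by
  have hxz := RingQuot.mkAlgHom_rel K (GRel.xz (K := K) (q := q))
  have hzy := RingQuot.mkAlgHom_rel K (GRel.zy (K := K) (q := q))
  have h1 := RingQuot.mkAlgHom_rel K (GRel.unit1 (K := K) (q := q))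
  have h2 := RingQuot.mkAlgHom_rel K (GRel.unit2 (K := K) (q := q))
  simp only [map_mul, map_add, map_smul, map_one] at hxz hzy h1 h2
  set X := RingQuot.mkAlgHom K (GRel K q) (FreeAlgebra.ι K 0) with hX
  set Y := RingQuot.mkAlgHom K (GRel K q) (FreeAlgebra.ι K 1) with hY
  set Z := RingQuot.mkAlgHom K (GRel K q) (FreeAlgebra.ι K 2) with hZ
  have hxy : X * Y = 1 - q ^ 2 • (Z * Z) := by rw [← h1]; abel
  have hyx : Y * X = 1 - (q ^ 2)⁻¹ • (Z * Z) := by rw [← h2]; abel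
  have m0 : ∀ a b : ℤ, q ^ a * q ^ b = q ^ (a + b) := fun a b => (zpow_add₀ hq0 a b).symm
  have m1 : ∀ (a : ℤ) (k : ℕ), q ^ a * q ^ k = q ^ (a + k) := fun a k => by
    rw [← zpow_natCast q k, m0]
  have m2 : ∀ (a : ℤ) (k : ℕ), q ^ k * q ^ a = q ^ (k + a) := fun a k => by
    rw [← zpow_natCast q k, m0]
  have m3 : ∀ a : ℤ, q ^ a * q = q ^ (a + 1) := fun a => by
    rw [zpow_add₀ hq0, zpow_one]
  have m4 : ∀ a : ℤ, q * q ^ a = q ^ (1 + a) := fun a => by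
    rw [zpow_add₀ hq0, zpow_one]
  have m5 : ∀ a : ℤ, q ^ a * q⁻¹ = q ^ (a - 1) := fun a => by
    rw [zpow_sub₀ hq0, zpow_one, div_eq_mul_inv]
  have m6 : ∀ a : ℤ, q⁻¹ * q ^ a = q ^ (-1 + a) := fun a => by
    rw [zpow_add₀ hq0, zpow_neg_one]
  have m13 : ∀ k : ℕ, q⁻¹ ^ k = q ^ (-(k:ℤ)) := fun k => by
    rw [inv_pow, ← zpow_natCast q k, zpow_neg]
  have m7 : ∀ (a : ℤ) (k : ℕ), (q ^ a) ^ k = q ^ (a * k) := fun a k => by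
    rw [← zpow_natCast (q ^ a) k, ← zpow_mul]
  have m8 : ∀ a : ℤ, (q ^ a)⁻¹ = q ^ (-a) := fun a => (zpow_neg q a).symm
  have m9 : ∀ k : ℕ, (q ^ k)⁻¹ = q ^ (-(k:ℤ)) := fun k => by
    rw [← zpow_natCast q k, zpow_neg]
  have m10 : q⁻¹ = q ^ (-1 : ℤ) := (zpow_neg_one q).symm
  have m11 : q * q⁻¹ = 1 := mul_inv_cancel₀ hq0
  have m12 : q⁻¹ * q = 1 := inv_mul_cancel₀ hq0
  refine ⟨?_, ?_⟩ <;>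
  · rw [Algebra.algebraMap_eq_smul_one]
    beta_reduce
    simp only [pow_two, sub_mul, mul_sub, add_mul, mul_add, smul_mul_assoc,
      mul_smul_comm, smul_smul, hxz, hzy, hxy, hyx, smul_sub, smul_add, smul_one]
    match_scalars
    all_goals simp only [m0, m1, m2, m3, m4, m5, m6, m7, m8, m9, m13, m10, m11, m12, mul_one,
      one_mul, zpow_zero]
    all_goals try ring_nf
    all_goals try simp only [m0, m1, m2, m3, m4, m5, m6, m7, m8, m9, m13, m10, m11, m12, mul_one,
      one_mul, zpow_zero]
    all_goals try ring_nf
    all_goals try ring1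
    all_goals try norm_cast
    all_goals try ring1
end

section
/- Let R be an algebra over K generated by a central involution m (m^2 = 1) together with elements X, Y, Z satisfying XZ = q^2ZX, ZY = q^2YZ, XY + q^2Z^2 = 1, YX + q^{-2}Z^2 = 1 (q not a root of unity, all commuting with m). Then the K-algebra characters of R on which Z acts by 0 are exactly the χ_{ε,λ} for ε ∈ {−1,1}, λ ∈ K×, determined by χ(m) = ε, χ(X) = λ, χ(Y) = λ^{-1}, χ(Z) = 0; moreover every character of R sends Z to 0. -/
open FreeAlgebra in
/-- Relations of `R_q(p,M)`: with `m = ι 0`, `X = ι 1`, `Y = ι 2`, `Z = ι 3`: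
`m² = 1`, `m` commutes with `X, Y, Z`, and
`XZ = q²ZX`, `ZY = q²YZ`, `XY + q²Z² = 1`, `YX + q⁻²Z² = 1`. -/
inductive PRel (K : Type) [Field K] (q : K) :
    FreeAlgebra K (Fin 4) → FreeAlgebra K (Fin 4) → Prop
  | m2 : PRel K q (ι K 0 * ι K 0) 1
  | mX : PRel K q (ι K 0 * ι K 1) (ι K 1 * ι K 0)
  | mY : PRel K q (ι K 0 * ι K 2) (ι K 2 * ι K 0)
  | mZ : PRel K q (ι K 0 * ι K 3) (ι K 3 * ι K 0)
  | xz : PRel K q (ι K 1 * ι K 3) (q ^ 2 • (ι K 3 * ι K 1))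
  | zy : PRel K q (ι K 3 * ι K 2) (q ^ 2 • (ι K 2 * ι K 3))
  | unit1 : PRel K q (ι K 1 * ι K 2 + q ^ 2 • (ι K 3 * ι K 3)) 1
  | unit2 : PRel K q (ι K 2 * ι K 1 + (q ^ 2)⁻¹ • (ι K 3 * ι K 3)) 1

/-- every `K`-algebra character `χ` of `R_q(p,M)` satisfies `χ(Z) = 0`,
`χ(m) = ±1`, `χ(X)` invertible with `χ(Y) = χ(X)⁻¹`; conversely, for every
`ε ∈ {−1,1}` and `λ ∈ K×`, there is a unique character `χ_{ε,λ}` with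
`χ(m) = ε`, `χ(X) = λ`, `χ(Y) = λ⁻¹`, `χ(Z) = 0`. -/
theorem stmt13 (K : Type) [Field K] (q : K) (hq0 : q ≠ 0)
    (hq : ∀ n : ℕ, 0 < n → q ^ n ≠ 1) :
    letI A := RingQuot (PRel K q)
    letI m : A := RingQuot.mkAlgHom K _ (FreeAlgebra.ι K 0)
    letI X : A := RingQuot.mkAlgHom K _ (FreeAlgebra.ι K 1)
    letI Y : A := RingQuot.mkAlgHom K _ (FreeAlgebra.ι K 2)
    letI Z : A := RingQuot.mkAlgHom K _ (FreeAlgebra.ι K 3)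
    (∀ χ : A →ₐ[K] K,
      χ Z = 0 ∧ (χ m = 1 ∨ χ m = -1) ∧ χ X ≠ 0 ∧ χ Y = (χ X)⁻¹) ∧
    (∀ ε lam : K, (ε = 1 ∨ ε = -1) → lam ≠ 0 →
      ∃! χ : A →ₐ[K] K, χ m = ε ∧ χ X = lam ∧ χ Y = lam⁻¹ ∧ χ Z = 0) := by
  set A := RingQuot (PRel K q) with hA
  set m : A := RingQuot.mkAlgHom K _ (FreeAlgebra.ι K 0) with hm0
  set X : A := RingQuot.mkAlgHom K _ (FreeAlgebra.ι K 1) with hX0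
  set Y : A := RingQuot.mkAlgHom K _ (FreeAlgebra.ι K 2) with hY0
  set Z : A := RingQuot.mkAlgHom K _ (FreeAlgebra.ι K 3) with hZ0
  have hq4 : q ^ 4 ≠ 1 := hq 4 (by norm_num)
  have key : ∀ {x y : FreeAlgebra K (Fin 4)}, PRel K q x y →
      RingQuot.mkAlgHom K (PRel K q) x = RingQuot.mkAlgHom K (PRel K q) y :=
    fun h => RingQuot.mkAlgHom_rel K h
  constructor
  · intro χ
    have h1 : χ X * χ Y + q ^ 2 * (χ Z * χ Z) = 1 := by
      have := congrArg χ (key PRel.unit1)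
      simpa [map_add, map_mul, map_smul, smul_eq_mul, hm0, hX0, hY0, hZ0] using this
    have h2 : χ Y * χ X + (q ^ 2)⁻¹ * (χ Z * χ Z) = 1 := by
      have := congrArg χ (key PRel.unit2)
      simpa [map_add, map_mul, map_smul, smul_eq_mul, hm0, hX0, hY0, hZ0] using this
    have hZ : χ Z = 0 := by
      have hsub : (q ^ 2 - (q ^ 2)⁻¹) * (χ Z * χ Z) = 0 := by
        linear_combination h1 - h2
      have hne : q ^ 2 - (q ^ 2)⁻¹ ≠ 0 := by
        intro h
        apply hq4
        have hq2 : q ^ 2 ≠ 0 := pow_ne_zero _ hq0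
        field_simp at h
        linear_combination h
      have := mul_eq_zero.mp hsub
      rcases this with h | h
      · exact absurd h hne
      · exact mul_self_eq_zero.mp h
    have hXY : χ X * χ Y = 1 := by
      have := h1; rw [hZ] at this; simpa using this
    have hm : χ m * χ m = 1 := by
      have := congrArg χ (key PRel.m2)
      simpa [map_mul, map_one, hm0] using this
    have hx : χ X ≠ 0 := by
      intro h; rw [h, zero_mul] at hXY; exact one_ne_zero hXY.symm
    exact ⟨hZ, mul_self_eq_one_iff.mp hm, hx, eq_inv_of_mul_eq_one_left (mul_comm (χ X) (χ Y) ▸ hXY)⟩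
  · intro ε lam hε hlam
    set f : FreeAlgebra K (Fin 4) →ₐ[K] K :=
      FreeAlgebra.lift K (![ε, lam, lam⁻¹, 0]) with hf
    have hfι : ∀ i, f (FreeAlgebra.ι K i) = ![ε, lam, lam⁻¹, 0] i := fun i =>
      FreeAlgebra.lift_ι_apply _ _
    have hrel : ∀ ⦃x y⦄, PRel K q x y → f x = f y := by
      intro x y h
      induction h with
      | m2 =>
        simp only [map_mul, map_one, hfι]
        rcases hε with h | h <;> simp [h]
      | mX => simp [map_mul, hfι, mul_comm]
      | mY => simp [map_mul, hfι, mul_comm]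
      | mZ => simp [map_mul, hfι, mul_comm]
      | xz => simp [map_mul, map_smul, hfι]
      | zy => simp [map_mul, map_smul, hfι]
      | unit1 =>
        simp only [map_add, map_mul, map_smul, map_one, hfι]
        simp [mul_inv_cancel₀ hlam]
      | unit2 =>
        simp only [map_add, map_mul, map_smul, map_one, hfι]
        simp [inv_mul_cancel₀ hlam]
    refine ⟨RingQuot.liftAlgHom K ⟨f, hrel⟩, ?_, ?_⟩
    · refine ⟨?_, ?_, ?_, ?_⟩ <;>
      · show RingQuot.liftAlgHom K ⟨f, hrel⟩ (RingQuot.mkAlgHom K _ _) = _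
        rw [RingQuot.liftAlgHom_mkAlgHom_apply]
        simp [hfι]
    · intro χ hχ
      apply RingQuot.ringQuot_ext'
      apply FreeAlgebra.hom_ext
      funext i
      have hχ' : χ m = ε ∧ χ X = lam ∧ χ Y = lam⁻¹ ∧ χ Z = 0 := hχ
      fin_cases i <;>
        simp only [Function.comp_apply, AlgHom.comp_apply,
          RingQuot.liftAlgHom_mkAlgHom_apply, hfι] <;>
        first
        | exact hχ'.1.trans (by simp)
        | exact hχ'.2.1.trans (by simp)
        | exact hχ'.2.2.1.trans (by simp)
        | exact hχ'.2.2.2.trans (by simp)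
end
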